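/- Let f be a multivariate real polynomial in n variables with deg f > 0, let h ∈ ℝ^n, and let g ∈ cone(h) with deg g > 0. Let z ∈ ℝ and let σ be a sum-of-squares polynomial such that f − g − σ·(z − f) is a sum of squares. Then deg g ≤ deg f + max{deg σ, 0} (equivalently, in the convention where the zero polynomial has total degree 0, deg g ≤ deg f + deg σ). -/
import Mathlib


open MvPolynomial Finset

/-- `g ∈ cone(h)`: a conic combination of monomials with even exponents
shifted by `h` (the constant coefficient `b 0` may be arbitrary). -/
def MemCone {n : ℕ} (h : Fin n → ℝ) (g : MvPolynomial (Fin n) ℝ) : Prop :=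
  ∃ (J : Finset (Fin n → ℕ)) (b : (Fin n → ℕ) → ℝ),
    (∀ α ∈ J, α ≠ 0 → 0 ≤ b α) ∧
    g = ∑ α ∈ J, MvPolynomial.C (b α) *
      ∏ i, (MvPolynomial.X i - MvPolynomial.C (h i)) ^ (2 * α i)

/-- A polynomial is a sum of squares. -/
def IsSos {n : ℕ} (p : MvPolynomial (Fin n) ℝ) : Prop :=
  ∃ (k : ℕ) (u : Fin k → MvPolynomial (Fin n) ℝ), p = ∑ i, (u i) ^ 2

/-- The "flattening" map sending every variable to the single univariate variable. -/
noncomputable def flat {n : ℕ} : MvPolynomial (Fin n) ℝ →ₐ[ℝ] Polynomial ℝ :=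
  MvPolynomial.aeval (fun _ : Fin n => (Polynomial.X : Polynomial ℝ))

lemma natDegree_flat_le {n : ℕ} (p : MvPolynomial (Fin n) ℝ) :
    (flat p).natDegree ≤ p.totalDegree := by
  conv_lhs => rw [p.as_sum, map_sum]
  apply Polynomial.natDegree_sum_le_of_forall_le
  intro m hm
  rw [flat, aeval_monomial]
  refine (Polynomial.natDegree_mul_le).trans ?_
  have h1 : (algebraMap ℝ (Polynomial ℝ) (coeff m p)).natDegree = 0 := by
    rw [Polynomial.algebraMap_eq]; exact Polynomial.natDegree_C _
  rw [h1, zero_add]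
  refine (Polynomial.natDegree_prod_le _ _).trans ?_
  refine le_trans (le_of_eq ?_) (MvPolynomial.le_totalDegree hm)
  rw [Finsupp.sum]
  exact Finset.sum_congr rfl fun i _ => by simp [Polynomial.natDegree_X_pow]

lemma flat_sos_nonneg {n : ℕ} {p : MvPolynomial (Fin n) ℝ} (hp : IsSos p) (t : ℝ) :
    0 ≤ (flat p).eval t := by
  obtain ⟨k, u, rfl⟩ := hp
  rw [map_sum]
  simp only [map_pow, Polynomial.eval_finset_sum, Polynomial.eval_pow]
  exact Finset.sum_nonneg fun i _ => sq_nonneg _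

theorem degree_bound_for_sublevel_underestimators
    {n : ℕ} (f g σ : MvPolynomial (Fin n) ℝ) (h : Fin n → ℝ) (z : ℝ)
    (hf : 0 < f.totalDegree) (hgc : MemCone h g) (hgd : 0 < g.totalDegree)
    (hσ : IsSos σ) (hsos : IsSos (f - g - σ * (MvPolynomial.C z - f))) :
    g.totalDegree ≤ f.totalDegree + σ.totalDegree := by
  classical
  by_contra hcon
  push_neg at hcon
  obtain ⟨J, b, hb, hg⟩ := hgc
  set J' : Finset (Fin n → ℕ) := J.filter (fun α => b α ≠ 0) with hJ'def
  have hg' : g = ∑ α ∈ J', MvPolynomial.C (b α) *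
      ∏ i, (MvPolynomial.X i - MvPolynomial.C (h i)) ^ (2 * α i) := by
    rw [hg]
    symm
    refine Finset.sum_filter_of_ne fun α _ hne => ?_
    intro hb0
    exact hne (by rw [hb0, map_zero, zero_mul])
  have hJ'ne : J'.Nonempty := by
    rcases Finset.eq_empty_or_nonempty J' with he | hne
    · rw [he, Finset.sum_empty] at hg'
      rw [hg', totalDegree_zero] at hgd
      exact absurd hgd (lt_irrefl 0)
    · exact hne
  set D : ℕ := J'.sup (fun α => ∑ i, 2 * α i) with hDdef
  -- total degree of each term
  have hterm : ∀ α : Fin n → ℕ,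
      (MvPolynomial.C (b α) *
        ∏ i, (MvPolynomial.X i - MvPolynomial.C (h i)) ^ (2 * α i)).totalDegree
        ≤ ∑ i, 2 * α i := by
    intro α
    refine (totalDegree_mul _ _).trans ?_
    rw [totalDegree_C, zero_add]
    refine (totalDegree_finset_prod _ _).trans ?_
    refine Finset.sum_le_sum fun i _ => ?_
    refine (totalDegree_pow _ _).trans ?_
    have : (MvPolynomial.X i - MvPolynomial.C (h i) :
        MvPolynomial (Fin n) ℝ).totalDegree ≤ 1 := by
      refine (totalDegree_sub _ _).trans ?_
      simp [totalDegree_X, totalDegree_C]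
    calc 2 * α i * (MvPolynomial.X i - MvPolynomial.C (h i) :
          MvPolynomial (Fin n) ℝ).totalDegree ≤ 2 * α i * 1 :=
        Nat.mul_le_mul_left _ this
      _ = 2 * α i := by ring
  have hgD : g.totalDegree ≤ D := by
    rw [hg']
    refine (totalDegree_finset_sum _ _).trans ?_
    exact Finset.sup_le fun α hα => (hterm α).trans
      (Finset.le_sup (f := fun α => ∑ i, 2 * α i) hα)
  have hDbig : f.totalDegree + σ.totalDegree < D := lt_of_lt_of_le hcon hgD
  have hDpos : 0 < D := lt_of_le_of_lt (Nat.zero_le _) (lt_of_lt_of_le hgd hgD)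
  -- univariate picture
  set q : Polynomial ℝ := flat (f - g - σ * (MvPolynomial.C z - f)) with hq
  have hqnonneg : ∀ t : ℝ, 0 ≤ q.eval t := flat_sos_nonneg hsos
  -- the univariate image of g
  have hflatg : flat g = ∑ α ∈ J', Polynomial.C (b α) *
      ∏ i, (Polynomial.X - Polynomial.C (h i)) ^ (2 * α i) := by
    rw [hg', map_sum]
    refine Finset.sum_congr rfl fun α _ => ?_
    rw [map_mul, map_prod]
    congr 1
    · rw [flat]; rw [aeval_C, Polynomial.algebraMap_eq]
    · refine Finset.prod_congr rfl fun i _ => ?_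
      rw [map_pow, map_sub, flat, aeval_X, aeval_C, Polynomial.algebraMap_eq]
  -- coefficient of degree D in flat g
  have hmonic : ∀ α : Fin n → ℕ,
      (∏ i, (Polynomial.X - Polynomial.C (h i)) ^ (2 * α i)).Monic :=
    fun α => Polynomial.monic_prod_of_monic _ _ fun i _ =>
      (Polynomial.monic_X_sub_C (h i)).pow _
  have hndeg : ∀ α : Fin n → ℕ,
      (∏ i, (Polynomial.X - Polynomial.C (h i)) ^ (2 * α i)).natDegree
        = ∑ i, 2 * α i := by
    intro α
    rw [Polynomial.natDegree_prod _ _ fun i _ =>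
      ((Polynomial.monic_X_sub_C (h i)).pow _).ne_zero]
    refine Finset.sum_congr rfl fun i _ => ?_
    rw [(Polynomial.monic_X_sub_C (h i)).natDegree_pow,
      Polynomial.natDegree_X_sub_C, mul_one]
  have hcoeffg : (flat g).coeff D = ∑ α ∈ J'.filter (fun α => ∑ i, 2 * α i = D), b α := by
    have key : ∀ α ∈ J', (Polynomial.C (b α) *
        ∏ i, (Polynomial.X - Polynomial.C (h i)) ^ (2 * α i)).coeff D
          = if (∑ i, 2 * α i) = D then b α else 0 := by
      intro α hα
      rw [Polynomial.coeff_C_mul]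
      by_cases hd : (∑ i, 2 * α i) = D
      · rw [if_pos hd]
        have : (∏ i, (Polynomial.X - Polynomial.C (h i)) ^ (2 * α i)).coeff D = 1 := by
          rw [← hd, ← hndeg α]
          exact (hmonic α).coeff_natDegree
        rw [this, mul_one]
      · rw [if_neg hd]
        have hle : (∑ i, 2 * α i) ≤ D :=
          Finset.le_sup (f := fun α => ∑ i, 2 * α i) hα
        have hlt : (∑ i, 2 * α i) < D := lt_of_le_of_ne hle hd
        rw [Polynomial.coeff_eq_zero_of_natDegree_lt (by rw [hndeg α]; exact hlt),
          mul_zero]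
    rw [hflatg, Polynomial.finset_sum_coeff, Finset.sum_congr rfl key,
      ← Finset.sum_filter]
  have hcpos : 0 < ∑ α ∈ J'.filter (fun α => ∑ i, 2 * α i = D), b α := by
    refine Finset.sum_pos ?_ ?_
    · intro α hα
      rw [Finset.mem_filter] at hα
      obtain ⟨hαJ', hαD⟩ := hα
      rw [hJ'def, Finset.mem_filter] at hαJ'
      obtain ⟨hαJ, hbne⟩ := hαJ'
      have hα0 : α ≠ 0 := by
        intro h0
        rw [h0] at hαD
        simp at hαD
        linarith
      exact lt_of_le_of_ne (hb α hαJ hα0) (Ne.symm hbne)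
    · obtain ⟨α₀, hα₀, hα₀D⟩ := Finset.exists_mem_eq_sup J' hJ'ne (fun α => ∑ i, 2 * α i)
      exact ⟨α₀, Finset.mem_filter.mpr ⟨hα₀, hα₀D.symm⟩⟩
  -- coefficient of q at D
  have hqsplit : q = flat f - flat g - flat σ * (Polynomial.C z - flat f) := by
    rw [hq, map_sub, map_sub, map_mul, map_sub]
    congr 2
    rw [flat, aeval_C, Polynomial.algebraMap_eq]
  have hcoefff : (flat f).coeff D = 0 :=
    Polynomial.coeff_eq_zero_of_natDegree_lt
      (lt_of_le_of_lt (natDegree_flat_le f) (by linarith))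
  have hcoeffmul : (flat σ * (Polynomial.C z - flat f)).coeff D = 0 := by
    refine Polynomial.coeff_eq_zero_of_natDegree_lt ?_
    refine lt_of_le_of_lt (Polynomial.natDegree_mul_le) ?_
    have h1 : (Polynomial.C z - flat f).natDegree ≤ f.totalDegree := by
      refine (Polynomial.natDegree_sub_le _ _).trans ?_
      simp only [Polynomial.natDegree_C]
      exact max_le (Nat.zero_le _) (natDegree_flat_le f)
    have h2 := natDegree_flat_le σ
    linarith
  have hqcoeff : q.coeff D = -(∑ α ∈ J'.filter (fun α => ∑ i, 2 * α i = D), b α) := by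
    rw [hqsplit, Polynomial.coeff_sub, Polynomial.coeff_sub, hcoefff, hcoeffg, hcoeffmul]
    ring
  have hqcoeffneg : q.coeff D < 0 := by rw [hqcoeff]; linarith
  -- natDegree of q is D
  have hqndeg_le : q.natDegree ≤ D := by
    rw [hqsplit]
    refine (Polynomial.natDegree_sub_le _ _).trans (max_le ?_ ?_)
    · refine (Polynomial.natDegree_sub_le _ _).trans (max_le ?_ ?_)
      · exact (natDegree_flat_le f).trans (by linarith)
      · exact (natDegree_flat_le g).trans hgD
    · refine (Polynomial.natDegree_mul_le).trans ?_
      have h1 : (Polynomial.C z - flat f).natDegree ≤ f.totalDegree := by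
        refine (Polynomial.natDegree_sub_le _ _).trans ?_
        simp only [Polynomial.natDegree_C]
        exact max_le (Nat.zero_le _) (natDegree_flat_le f)
      have h2 := natDegree_flat_le σ
      linarith
  have hqndeg : q.natDegree = D :=
    le_antisymm hqndeg_le (Polynomial.le_natDegree_of_ne_zero (ne_of_lt hqcoeffneg))
  have hqne : q ≠ 0 := fun h0 => by
    rw [h0, Polynomial.coeff_zero] at hqcoeffneg; exact absurd hqcoeffneg (lt_irrefl 0)
  have hdegpos : 0 < q.degree := by
    rw [Polynomial.degree_eq_natDegree hqne, hqndeg]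
    exact_mod_cast hDpos
  have hlead : q.leadingCoeff ≤ 0 := by
    rw [Polynomial.leadingCoeff, hqndeg]; exact le_of_lt hqcoeffneg
  have htend := Polynomial.tendsto_atBot_of_leadingCoeff_nonpos q hdegpos hlead
  obtain ⟨t, ht⟩ := (htend.eventually (Filter.eventually_lt_atBot (0 : ℝ))).exists
  exact absurd (hqnonneg t) (not_le.mpr ht)
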